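/- arXiv:2004.04631 — 2 statements merged into one kernel-verified Lean document; each statement's English description precedes it below -/
import Mathlib

section
/- The Gaussian mechanism M(S) = f(S) + N(0, σ²), where f has sensitivity Δ (i.e., |f(S) − f(S′)| ≤ Δ for all adjacent S, S′), satisfies (α, αΔ²/(2σ²))-Rényi differential privacy for every α > 1. -/
open MeasureTheory Real ProbabilityTheory
open scoped NNReal

noncomputable def renyiDiv {X : Type*} [MeasurableSpace X] (μ : Measure X)
    (p q : X → ℝ) (α : ℝ) : ℝ :=
  (α - 1)⁻¹ * Real.log (∫ x, q x * (p x / q x) ^ α ∂μ)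

lemma gaussian_renyi_integral (m m' : ℝ) {v : NNReal} (hv : v ≠ 0) (α : ℝ) :
    ∫ x, gaussianPDFReal m' v x * (gaussianPDFReal m v x / gaussianPDFReal m' v x) ^ α
      = Real.exp (α * (α - 1) * (m - m') ^ 2 / (2 * v)) := by
  have hvpos : (0:ℝ) < (v:ℝ) := by exact_mod_cast hv.bot_lt
  set c : ℝ := α * m - (α - 1) * m' with hc
  set C : ℝ := Real.exp (α * (α - 1) * (m - m') ^ 2 / (2 * v)) with hC
  have key : ∀ x : ℝ,
      gaussianPDFReal m' v x * (gaussianPDFReal m v x / gaussianPDFReal m' v x) ^ α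
        = C * gaussianPDFReal c v x := by
    intro x
    have hs : (0:ℝ) < Real.sqrt (2 * π * v) := Real.sqrt_pos.mpr (by positivity)
    have h1 : gaussianPDFReal m v x / gaussianPDFReal m' v x
        = Real.exp (- (x - m)^2 / (2*v) - (- (x - m')^2 / (2*v))) := by
      simp only [gaussianPDFReal]
      rw [mul_div_mul_left _ _ (by positivity : (Real.sqrt (2 * π * v))⁻¹ ≠ 0),
        ← Real.exp_sub]
    rw [h1, ← Real.exp_mul]
    simp only [gaussianPDFReal, hC]
    rw [mul_assoc, ← Real.exp_add,
      show (- (x - m')^2 / (2*(v:ℝ)) + (- (x - m)^2 / (2*v) - - (x - m')^2 / (2*v)) * α)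
        = α * (α - 1) * (m - m') ^ 2 / (2 * v) + (- (x - c)^2 / (2*v)) by
          field_simp; ring,
      Real.exp_add]
    ring
  rw [show (fun x => gaussianPDFReal m' v x *
      (gaussianPDFReal m v x / gaussianPDFReal m' v x) ^ α)
      = fun x => C * gaussianPDFReal c v x from funext key,
    MeasureTheory.integral_const_mul, integral_gaussianPDFReal_eq_one c hv, mul_one]

/-- The Gaussian mechanism `M(S) = f(S) + N(0, σ²)`, whose output distribution has density
`gaussianPDFReal (f S) σ²`, satisfies `(α, α Δ² / (2σ²))`-RDP for every `α > 1`. -/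
theorem gaussian_mechanism_rdp {S : Type*} (adjacent : S → S → Prop)
    (f : S → ℝ) (Δ σ : ℝ) (hσ : 0 < σ)
    (hsens : ∀ s s', adjacent s s' → |f s - f s'| ≤ Δ)
    (α : ℝ) (hα : 1 < α) :
    ∀ s s', adjacent s s' →
      renyiDiv (volume : Measure ℝ)
        (gaussianPDFReal (f s) (σ ^ 2).toNNReal)
        (gaussianPDFReal (f s') (σ ^ 2).toNNReal) α
        ≤ α * Δ ^ 2 / (2 * σ ^ 2) := by
  intro s s' hadj
  have hσ2 : (0:ℝ) < σ ^ 2 := by positivity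
  have hv : (σ ^ 2).toNNReal ≠ 0 := by
    simp [Real.toNNReal_eq_zero, not_le, hσ2, hσ.ne']
  have hv' : (((σ ^ 2).toNNReal : ℝ≥0) : ℝ) = σ ^ 2 := Real.coe_toNNReal _ hσ2.le
  have hα1 : α - 1 ≠ 0 := by linarith
  have hd : (f s - f s') ^ 2 ≤ Δ ^ 2 := by
    have h := hsens s s' hadj
    calc (f s - f s') ^ 2 = |f s - f s'| ^ 2 := (sq_abs _).symm
      _ ≤ Δ ^ 2 := by
        have := abs_nonneg (f s - f s')
        gcongr
  unfold renyiDiv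
  rw [gaussian_renyi_integral _ _ hv, Real.log_exp, hv']
  have heq : (α - 1)⁻¹ * (α * (α - 1) * (f s - f s') ^ 2 / (2 * σ ^ 2))
      = α * (f s - f s') ^ 2 / (2 * σ ^ 2) := by
    field_simp
  rw [heq]
  gcongr
end

section
/- As α → 1, the Rényi divergence D_α(P‖Q) converges to the Kullback–Leibler divergence KL(P‖Q) = ∫ p(x) ln(p(x)/q(x)) dx, assuming D_β(P‖Q) is finite for some β > 1. -/
open MeasureTheory Real Filter

/-- The Kullback–Leibler divergence between densities `p` and `q`. -/
noncomputable def klDiv {X : Type*} [MeasurableSpace X] (μ : Measure X)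
    (p q : X → ℝ) : ℝ :=
  ∫ x, p x * Real.log (p x / q x) ∂μ

lemma measurable_rpow_const_aux {X : Type*} [MeasurableSpace X] {f : X → ℝ} (hf : Measurable f)
    (hf0 : ∀ x, 0 ≤ f x) (α : ℝ) : Measurable fun x => f x ^ α := by
  have heq : (fun x => f x ^ α) =
      fun x => if f x = 0 then (0:ℝ) ^ α else Real.exp (Real.log (f x) * α) := by
    funext x
    rcases eq_or_ne (f x) 0 with h | h
    · simp [h]
    · rw [if_neg h, ← Real.rpow_def_of_pos (lt_of_le_of_ne (hf0 x) (Ne.symm h))]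
  rw [heq]
  exact Measurable.ite (hf (measurableSet_singleton 0)) measurable_const
    (Real.measurable_exp.comp ((Real.measurable_log.comp hf).mul measurable_const))

theorem renyiDiv_tendsto_klDiv {X : Type*} [MeasurableSpace X] (μ : Measure X)
    (p q : X → ℝ)
    (hp : Measurable p) (hq : Measurable q)
    (hp0 : ∀ x, 0 ≤ p x) (hq0 : ∀ x, 0 ≤ q x)
    (hP : ∫ x, p x ∂μ = 1) (hQ : ∫ x, q x ∂μ = 1)
    (hpq : ∀ᵐ x ∂μ, q x = 0 → p x = 0)
    (β : ℝ) (hβ : 1 < β)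
    (hfin : Integrable (fun x => q x * (p x / q x) ^ β) μ) :
    Tendsto (fun α => renyiDiv μ p q α) (nhdsWithin 1 {1}ᶜ) (nhds (klDiv μ p q)) := by
  have hpint : Integrable p μ := by
    by_contra h; rw [integral_undef h] at hP; norm_num at hP
  have hqint : Integrable q μ := by
    by_contra h; rw [integral_undef h] at hQ; norm_num at hQ
  set t : X → ℝ := fun x => p x / q x with ht
  have ht0 : ∀ x, 0 ≤ t x := fun x => div_nonneg (hp0 x) (hq0 x)
  have hmeast : Measurable t := hp.div hq
  set G : ℝ → X → ℝ := fun α x => q x * t x ^ α with hG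
  set F : ℝ → ℝ := fun α => ∫ x, G α x ∂μ with hF
  set δ : ℝ := (β - 1) / 2 with hδdef
  have hδ : 0 < δ := by rw [hδdef]; linarith
  set ε : ℝ := min (1/4) δ with hεdef
  have hε : 0 < ε := lt_min (by norm_num) hδ
  -- the integrand at α = 1 is a.e. equal to p
  have h1 : ∀ᵐ x ∂μ, G 1 x = p x := by
    filter_upwards [hpq] with x hx
    rcases eq_or_ne (q x) 0 with h | h
    · simp [hG, ht, h, hx h]
    · simp only [hG, ht, Real.rpow_one]
      field_simp
  have hF1 : F 1 = 1 := by
    rw [show F 1 = ∫ x, G 1 x ∂μ from rfl, integral_congr_ae h1, hP]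
  have hFint1 : Integrable (G 1) μ := hpint.congr (h1.mono fun x hx => hx.symm)
  -- derivative integrand
  set G' : ℝ → X → ℝ := fun α x => q x * (t x ^ α * Real.log (t x)) with hG'
  -- bound
  set bound : X → ℝ := fun x => 2 * q x + δ⁻¹ * (q x * t x ^ β) with hbounddef
  have hboundint : Integrable bound μ := (hqint.const_mul 2).add (hfin.const_mul δ⁻¹)
  have hmeasG : ∀ α : ℝ, AEStronglyMeasurable (G α) μ := fun α =>
    (hq.mul (measurable_rpow_const_aux hmeast ht0 α)).aestronglyMeasurable
  have hmeasG' : AEStronglyMeasurable (G' 1) μ :=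
    (hq.mul ((measurable_rpow_const_aux hmeast ht0 1).mul
      (Real.measurable_log.comp hmeast))).aestronglyMeasurable
  -- the bound
  have h_bound : ∀ᵐ x ∂μ, ∀ α ∈ Metric.ball (1:ℝ) ε, ‖G' α x‖ ≤ bound x := by
    refine Eventually.of_forall fun x => fun α hα => ?_
    have hα' : |α - 1| < ε := by
      simpa [Metric.mem_ball, Real.dist_eq] using hα
    have hα1 : (1:ℝ)/2 ≤ α := by
      have := abs_lt.1 hα'
      have : -(1/4 : ℝ) < α - 1 := lt_of_le_of_lt (neg_le_neg (min_le_left _ δ)) this.1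
      linarith
    have hα2 : α ≤ β - δ := by
      have h2 := (abs_lt.1 hα').2
      have : α - 1 < δ := lt_of_lt_of_le h2 (min_le_right _ _)
      rw [hδdef]; rw [hδdef] at this; linarith
    have hqx := hq0 x
    have hbnd0 : 0 ≤ bound x := by
      have : (0:ℝ) ≤ t x ^ β := Real.rpow_nonneg (ht0 x) _
      have := hδ
      positivity
    rcases lt_or_eq_of_le (ht0 x) with htpos | htzero
    · -- t x > 0
      have key : t x ^ α * |Real.log (t x)| ≤ 2 + δ⁻¹ * t x ^ β := by
        rcases le_or_gt (t x) 1 with hle | hgt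
        · -- t ≤ 1 : t^α |log t| ≤ 2
          have hlog : |Real.log (t x)| ≤ 2 * t x ^ (-(1/2):ℝ) := by
            rw [abs_of_nonpos (Real.log_nonpos (le_of_lt htpos) hle)]
            have : Real.log ((t x) ^ (-(1/2):ℝ)) ≤ (t x) ^ (-(1/2):ℝ) - 1 :=
              Real.log_le_sub_one_of_pos (Real.rpow_pos_of_pos htpos _)
            rw [Real.log_rpow htpos] at this
            nlinarith [Real.rpow_pos_of_pos htpos (-(1/2):ℝ)]
          have hpow : t x ^ α ≤ t x ^ ((1:ℝ)/2) :=
            Real.rpow_le_rpow_of_exponent_ge htpos hle hα1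
          calc t x ^ α * |Real.log (t x)| ≤ t x ^ ((1:ℝ)/2) * (2 * t x ^ (-(1/2):ℝ)) := by
                apply mul_le_mul hpow hlog (abs_nonneg _) (Real.rpow_nonneg (ht0 x) _)
            _ = 2 := by
                rw [mul_comm (2:ℝ), ← mul_assoc, ← Real.rpow_add htpos]
                norm_num
            _ ≤ 2 + δ⁻¹ * t x ^ β := by
                have : (0:ℝ) ≤ δ⁻¹ * t x ^ β := by
                  have := Real.rpow_nonneg (ht0 x) β; positivity
                linarith
        · -- t > 1
          have hlog0 : 0 ≤ Real.log (t x) := Real.log_nonneg (le_of_lt hgt)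
          have hlog : Real.log (t x) ≤ δ⁻¹ * t x ^ δ := by
            have h1 : Real.log ((t x) ^ δ) ≤ (t x) ^ δ - 1 :=
              Real.log_le_sub_one_of_pos (Real.rpow_pos_of_pos htpos _)
            rw [Real.log_rpow htpos] at h1
            have h2 : δ * Real.log (t x) ≤ t x ^ δ := by
              nlinarith [Real.rpow_pos_of_pos htpos δ]
            calc Real.log (t x) = δ⁻¹ * (δ * Real.log (t x)) := by
                  field_simp
              _ ≤ δ⁻¹ * t x ^ δ :=
                  mul_le_mul_of_nonneg_left h2 (inv_pos.2 hδ).le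
          have hpow : t x ^ α ≤ t x ^ (β - δ) :=
            Real.rpow_le_rpow_of_exponent_le (le_of_lt hgt) hα2
          rw [abs_of_nonneg hlog0]
          calc t x ^ α * Real.log (t x) ≤ t x ^ (β - δ) * (δ⁻¹ * t x ^ δ) := by
                apply mul_le_mul hpow hlog hlog0 (Real.rpow_nonneg (ht0 x) _)
            _ = δ⁻¹ * t x ^ β := by
                rw [mul_comm (δ⁻¹), ← mul_assoc, ← Real.rpow_add htpos, sub_add_cancel]
                ring
            _ ≤ 2 + δ⁻¹ * t x ^ β := by linarith
      have : ‖G' α x‖ = q x * (t x ^ α * |Real.log (t x)|) := by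
        rw [hG']
        rw [Real.norm_eq_abs, abs_mul, abs_of_nonneg hqx, abs_mul,
          abs_of_nonneg (Real.rpow_nonneg (ht0 x) _)]
      rw [this, hbounddef]
      calc q x * (t x ^ α * |Real.log (t x)|) ≤ q x * (2 + δ⁻¹ * t x ^ β) :=
            mul_le_mul_of_nonneg_left key hqx
        _ = 2 * q x + δ⁻¹ * (q x * t x ^ β) := by ring
    · -- t x = 0
      have : G' α x = 0 := by
        have hαne : α ≠ 0 := by
          intro h; rw [h] at hα1; norm_num at hα1
        simp [hG', ← htzero, Real.zero_rpow hαne]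
      rw [this]; simpa using hbnd0
  -- differentiability
  have h_diff : ∀ᵐ x ∂μ, ∀ α ∈ Metric.ball (1:ℝ) ε, HasDerivAt (fun a => G a x) (G' α x) α := by
    refine Eventually.of_forall fun x α hα => ?_
    have hα' : |α - 1| < ε := by simpa [Metric.mem_ball, Real.dist_eq] using hα
    have hα1 : (0:ℝ) < α := by
      have := (abs_lt.1 hα').1
      have h4 : -(1/4:ℝ) ≤ -ε := neg_le_neg (min_le_left _ δ)
      linarith
    rcases lt_or_eq_of_le (ht0 x) with htpos | htzero
    · have hd : HasDerivAt (fun a : ℝ => t x ^ a) (t x ^ α * Real.log (t x)) α :=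
        (Real.hasStrictDerivAt_const_rpow htpos α).hasDerivAt
      simpa [hG', mul_comm, mul_assoc, mul_left_comm] using hd.const_mul (q x)
    · -- t x = 0 : function is eventually 0 near α
      have hev : (fun a : ℝ => G a x) =ᶠ[nhds α] fun _ => 0 := by
        filter_upwards [eventually_gt_nhds hα1] with a ha
        simp [hG, ← htzero, Real.zero_rpow (ne_of_gt ha)]
      have h0 : HasDerivAt (fun _ : ℝ => (0:ℝ)) 0 α := hasDerivAt_const α 0
      have : HasDerivAt (fun a : ℝ => G a x) 0 α := h0.congr_of_eventuallyEq hev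
      have hG'0 : G' α x = 0 := by
        simp [hG', ← htzero, Real.zero_rpow (ne_of_gt hα1)]
      rw [hG'0]; exact this
  have key := hasDerivAt_integral_of_dominated_loc_of_deriv_le (Metric.ball_mem_nhds 1 hε)
    (Eventually.of_forall fun α => hmeasG α) hFint1 hmeasG' h_bound hboundint h_diff
  obtain ⟨-, hFderiv⟩ := key
  -- identify the derivative with klDiv
  have hklv : ∫ x, G' 1 x ∂μ = klDiv μ p q := by
    apply integral_congr_ae
    filter_upwards [hpq] with x hx
    rcases eq_or_ne (q x) 0 with h | h
    · simp [hG', klDiv, ht, h, hx h]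
    · simp only [hG', klDiv, ht, Real.rpow_one]
      field_simp
  rw [hklv] at hFderiv
  -- log ∘ F
  have hFne : F 1 ≠ 0 := by rw [hF1]; norm_num
  have hlogF : HasDerivAt (fun α => Real.log (F α)) (klDiv μ p q) 1 := by
    have := (Real.hasDerivAt_log hFne).comp 1 hFderiv
    rw [hF1, inv_one, one_mul] at this
    exact this
  rw [hasDerivAt_iff_tendsto_slope] at hlogF
  apply hlogF.congr
  intro α
  rw [slope_def_field, hF1, Real.log_one, sub_zero, div_eq_inv_mul]
  rfl
end
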